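/- For any triangle ABC with side lengths a = BC, b = CA, c = AB, and any two points X, Y in its plane, the inequality a·AX·AY + b·BX·BY + c·CX·CY ≥ a·b·c holds. -/

import Mathlib

theorem stmt_7 (a b c x y : ℂ) (h : ¬ Collinear ℝ ({a, b, c} : Set ℂ)) :
    dist b c * dist a x * dist a y + dist c a * dist b x * dist b y +
      dist a b * dist c x * dist c y ≥ dist b c * dist c a * dist a b := by
  have key : (x - a) * (y - a) * (b - c) + (x - b) * (y - b) * (c - a)
      + (x - c) * (y - c) * (a - b) = -((a - b) * (b - c) * (c - a)) := by ring
  have h1 : ‖(a - b) * (b - c) * (c - a)‖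
      ≤ ‖(x - a) * (y - a) * (b - c)‖ +
        ‖(x - b) * (y - b) * (c - a)‖ +
        ‖(x - c) * (y - c) * (a - b)‖ := by
    calc ‖(a - b) * (b - c) * (c - a)‖
        = ‖(x - a) * (y - a) * (b - c) + (x - b) * (y - b) * (c - a)
          + (x - c) * (y - c) * (a - b)‖ := by rw [key, norm_neg]
      _ ≤ _ := by
          refine (norm_add_le _ _).trans ?_
          gcongr
          exact norm_add_le _ _
  simp only [Complex.dist_eq, norm_mul] at *
  rw [ge_iff_le]
  calc ‖b - c‖ * ‖c - a‖ * ‖a - b‖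
      = ‖a - b‖ * ‖b - c‖ * ‖c - a‖ := by ring
    _ ≤ _ := by
        refine h1.trans_eq ?_
        rw [show a - x = -(x - a) by ring, show a - y = -(y - a) by ring,
          show b - x = -(x - b) by ring, show b - y = -(y - b) by ring,
          show c - x = -(x - c) by ring, show c - y = -(y - c) by ring]
        simp only [norm_neg]
        ring
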